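/- Let p ∈ ℝⁿ and ξ an n×n real symmetric matrix, and define A(p,ξ) = G(p)·ξ/√(1+|p|²) where G(p) = I − p pᵀ/(1+|p|²), H = tr(A), and R = H² − tr(A²). If R ≥ 0 and H ≥ 0, then the matrix (H·I − A)·G(p) is positive semidefinite (as a bilinear form, i.e. its symmetric part is positive semidefinite). -/

import Mathlib

set_option maxHeartbeats 1000000


open Matrix

noncomputable def gInv (n : ℕ) (p : Fin n → ℝ) : Matrix (Fin n) (Fin n) ℝ :=
  fun i j => (if i = j then (1 : ℝ) else 0) - p i * p j / (1 + ∑ l, (p l) ^ 2)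

noncomputable def shapeOp (n : ℕ) (p : Fin n → ℝ) (ξ : Matrix (Fin n) (Fin n) ℝ) :
    Matrix (Fin n) (Fin n) ℝ :=
  fun i j => (∑ k, gInv n p i k * ξ k j) / Real.sqrt (1 + ∑ l, (p l) ^ 2)

noncomputable def meanCurv (n : ℕ) (p : Fin n → ℝ) (ξ : Matrix (Fin n) (Fin n) ℝ) : ℝ :=
  ∑ i, shapeOp n p ξ i i

noncomputable def scalCurv (n : ℕ) (p : Fin n → ℝ) (ξ : Matrix (Fin n) (Fin n) ℝ) : ℝ :=
  (meanCurv n p ξ) ^ 2 - ∑ i, ∑ j, shapeOp n p ξ i j * shapeOp n p ξ j i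

/-- Key spectral lemma: if `B` is real symmetric with `0 ≤ tr B` and `tr (B²) ≤ (tr B)²`,
then `tr B • 1 - B` is positive semidefinite. -/
lemma key_spectral {n : ℕ} {B : Matrix (Fin n) (Fin n) ℝ} (hB : B.IsHermitian)
    (htr : 0 ≤ B.trace) (h2 : (B * B).trace ≤ B.trace ^ 2) :
    (B.trace • (1 : Matrix (Fin n) (Fin n) ℝ) - B).PosSemidef := by
  classical
  set U : Matrix (Fin n) (Fin n) ℝ := (hB.eigenvectorUnitary : Matrix (Fin n) (Fin n) ℝ) with hUdef
  have hU1 : U * star U = 1 := (Matrix.mem_unitaryGroup_iff).mp hB.eigenvectorUnitary.2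
  have hU2 : star U * U = 1 := (Matrix.mem_unitaryGroup_iff').mp hB.eigenvectorUnitary.2
  have hspec : B = U * diagonal hB.eigenvalues * star U := by
    have := hB.spectral_theorem
    simpa using this
  have htrB : B.trace = ∑ i, hB.eigenvalues i := by
    conv_lhs => rw [hspec]
    rw [trace_mul_cycle, hU2, one_mul, trace_diagonal]
  have hBB : B * B = U * (diagonal hB.eigenvalues * diagonal hB.eigenvalues) * star U := by
    conv_lhs => rw [hspec]
    simp only [Matrix.mul_assoc]
    rw [← Matrix.mul_assoc (star U) U, hU2, one_mul]
  have htrB2 : (B * B).trace = ∑ i, hB.eigenvalues i ^ 2 := by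
    rw [hBB, trace_mul_cycle, hU2, one_mul, diagonal_mul_diagonal, trace_diagonal]
    exact Finset.sum_congr rfl fun i _ => (sq (hB.eigenvalues i)).symm
  have hbound : ∀ i, hB.eigenvalues i ≤ B.trace := by
    intro i
    have h1 : hB.eigenvalues i ^ 2 ≤ B.trace ^ 2 := by
      calc hB.eigenvalues i ^ 2 ≤ ∑ j, hB.eigenvalues j ^ 2 :=
            Finset.single_le_sum (f := fun j => hB.eigenvalues j ^ 2)
              (fun j _ => sq_nonneg _) (Finset.mem_univ i)
        _ = (B * B).trace := htrB2.symm
        _ ≤ B.trace ^ 2 := h2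
    nlinarith [h1, htr]
  have key : B.trace • (1 : Matrix (Fin n) (Fin n) ℝ) - B
      = U * diagonal (fun i => B.trace - hB.eigenvalues i) * star U := by
    have hdiag : diagonal (fun i => B.trace - hB.eigenvalues i)
        = B.trace • (1 : Matrix (Fin n) (Fin n) ℝ) - diagonal hB.eigenvalues := by
      ext i j
      by_cases h : i = j <;>
        simp [h, Matrix.diagonal, Matrix.one_apply, Matrix.sub_apply, Matrix.smul_apply]
    rw [hdiag, Matrix.mul_sub, Matrix.sub_mul, ← hspec]
    rw [mul_smul_comm, mul_one, smul_mul_assoc, hU1]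
  rw [key]
  have hpsd : (diagonal (fun i => B.trace - hB.eigenvalues i)).PosSemidef :=
    posSemidef_diagonal_iff.mpr fun i => sub_nonneg.mpr (hbound i)
  simpa [Matrix.star_eq_conjTranspose] using hpsd.mul_mul_conjTranspose_same U

open scoped MatrixOrder in
lemma psd_sqrt_exists {n : ℕ} {G : Matrix (Fin n) (Fin n) ℝ} (h : G.PosSemidef) :
    ∃ S : Matrix (Fin n) (Fin n) ℝ, S.IsHermitian ∧ S * S = G :=
  ⟨CFC.sqrt G, (CFC.sqrt_nonneg G).posSemidef.1, CFC.sqrt_mul_sqrt_self G h.nonneg⟩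

theorem pointwise_ellipticity (n : ℕ) (p : Fin n → ℝ) (ξ : Matrix (Fin n) (Fin n) ℝ)
    (hξ : ξ.IsSymm) (hR : 0 ≤ scalCurv n p ξ) (hH : 0 ≤ meanCurv n p ξ) :
    (((1 : ℝ) / 2) •
      (((meanCurv n p ξ • (1 : Matrix (Fin n) (Fin n) ℝ) - shapeOp n p ξ) * gInv n p)
        + ((meanCurv n p ξ • (1 : Matrix (Fin n) (Fin n) ℝ) - shapeOp n p ξ) * gInv n p)ᵀ)).PosSemidef := by
  classical
  set q : ℝ := 1 + ∑ l, (p l) ^ 2 with hq_def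
  have hq : (0 : ℝ) < q := by positivity
  set s : ℝ := Real.sqrt q with hs_def
  have hs : 0 < s := Real.sqrt_pos.mpr hq
  set G : Matrix (Fin n) (Fin n) ℝ := gInv n p with hG_def
  have hGsymm : Gᵀ = G := by
    ext i j
    simp only [Matrix.transpose_apply, hG_def, gInv]
    rw [mul_comm (p j) (p i)]
    congr 1
    simp [eq_comm]
  have hGpsd : G.PosSemidef := by
    refine Matrix.PosSemidef.of_dotProduct_mulVec_nonneg ?_ ?_
    · show Gᴴ = G
      ext i j
      simp only [Matrix.conjTranspose_apply, star_trivial]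
      exact congrFun (congrFun hGsymm i) j
    · intro x
      have hmv : ∀ i, (G *ᵥ x) i = x i - p i * (∑ j, p j * x j) / q := by
        intro i
        simp only [Matrix.mulVec, dotProduct, hG_def, gInv, sub_mul, ite_mul, one_mul,
          zero_mul, Finset.sum_sub_distrib, Finset.sum_ite_eq, Finset.mem_univ, if_true]
        congr 1
        rw [Finset.mul_sum, Finset.sum_div]
        exact Finset.sum_congr rfl fun j _ => by ring
      have hdp : star x ⬝ᵥ (G *ᵥ x) = (∑ i, x i ^ 2) - (∑ j, p j * x j) ^ 2 / q := by
        simp only [dotProduct, Pi.star_apply, star_trivial]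
        rw [Finset.sum_congr rfl fun i _ => by rw [hmv i]]
        rw [Finset.sum_congr rfl (fun i (_ : i ∈ Finset.univ) =>
          (mul_sub (x i) (x i) (p i * (∑ j, p j * x j) / q)))]
        rw [Finset.sum_sub_distrib]
        congr 1
        · exact Finset.sum_congr rfl fun i _ => (sq (x i)).symm
        · rw [show (∑ i, x i * (p i * (∑ j, p j * x j) / q))
              = (∑ j, p j * x j) * ((∑ j, p j * x j) / q) from by
            rw [Finset.sum_mul]; exact Finset.sum_congr rfl fun i _ => by ring]
          rw [sq, mul_div_assoc]
      rw [hdp]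
      have hcs : (∑ j, p j * x j) ^ 2 ≤ (∑ j, (p j) ^ 2) * ∑ j, (x j) ^ 2 :=
        Finset.sum_mul_sq_le_sq_mul_sq Finset.univ p x
      have hp2 : (∑ j, (p j) ^ 2) ≤ q := by
        rw [hq_def]; linarith
      have hx2 : 0 ≤ ∑ j, (x j) ^ 2 := Finset.sum_nonneg fun j _ => sq_nonneg _
      rw [sub_nonneg, div_le_iff₀ hq]
      calc (∑ j, p j * x j) ^ 2 ≤ (∑ j, (p j)^2) * ∑ j, (x j)^2 := hcs
        _ ≤ q * ∑ j, (x j)^2 := by nlinarith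
        _ = (∑ j, (x j)^2) * q := mul_comm _ _
  obtain ⟨S, hSherm, hSS⟩ := psd_sqrt_exists hGpsd
  have hA : shapeOp n p ξ = s⁻¹ • (G * ξ) := by
    funext i j
    simp only [shapeOp, Matrix.smul_apply, Matrix.mul_apply, smul_eq_mul, hG_def]
    rw [div_eq_inv_mul]
  set ξ' : Matrix (Fin n) (Fin n) ℝ := s⁻¹ • ξ with hξ'def
  set B : Matrix (Fin n) (Fin n) ℝ := S * ξ' * S with hBdef
  have hξH : ξᴴ = ξ := by
    ext i j
    simp only [Matrix.conjTranspose_apply, star_trivial]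
    exact hξ.apply i j
  have hBH : B.IsHermitian := by
    show Bᴴ = B
    rw [hBdef, conjTranspose_mul, conjTranspose_mul, hξ'def, conjTranspose_smul, hξH,
      hSherm.eq, star_trivial, Matrix.mul_assoc]
  have hGA : G * ξ' = s⁻¹ • (G * ξ) := mul_smul_comm _ _ _
  have htrB : B.trace = meanCurv n p ξ := by
    have h1 : meanCurv n p ξ = (shapeOp n p ξ).trace := rfl
    rw [h1, hA, hBdef, trace_mul_cycle, hSS, hGA]
  have htrB2 : (B * B).trace = ∑ i, ∑ j, shapeOp n p ξ i j * shapeOp n p ξ j i := by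
    have hRHS : ∑ i, ∑ j, shapeOp n p ξ i j * shapeOp n p ξ j i
        = (shapeOp n p ξ * shapeOp n p ξ).trace := by
      simp [Matrix.trace, Matrix.diag, Matrix.mul_apply]
    have hBB : B * B = S * (ξ' * G * ξ') * S := by
      rw [hBdef]
      simp only [Matrix.mul_assoc]
      rw [← Matrix.mul_assoc S S, hSS]
    rw [hRHS, hA, ← hGA, hBB, trace_mul_cycle, hSS]
    simp only [Matrix.mul_assoc]
  have h2 : (B * B).trace ≤ B.trace ^ 2 := by
    rw [htrB, htrB2]
    have := hR
    simp only [scalCurv] at this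
    linarith
  have hkey := key_spectral hBH (htrB ▸ hH) h2
  have hpsd := hkey.mul_mul_conjTranspose_same S
  rw [hSherm.eq] at hpsd
  have e1 : (meanCurv n p ξ • (1 : Matrix (Fin n) (Fin n) ℝ) - shapeOp n p ξ) * G
      = meanCurv n p ξ • G - s⁻¹ • (G * ξ * G) := by
    rw [hA, Matrix.sub_mul, smul_mul_assoc, one_mul, smul_mul_assoc]
  have e2 : S * (B.trace • (1 : Matrix (Fin n) (Fin n) ℝ) - B) * S
      = meanCurv n p ξ • G - s⁻¹ • (G * ξ * G) := by
    have h1 : S * (meanCurv n p ξ • (1 : Matrix (Fin n) (Fin n) ℝ)) * S = meanCurv n p ξ • G := by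
      rw [mul_smul_comm, mul_one, smul_mul_assoc, hSS]
    have h2 : S * B * S = s⁻¹ • (G * ξ * G) := by
      rw [hBdef, hξ'def, mul_smul_comm, smul_mul_assoc, mul_smul_comm, smul_mul_assoc,
        Matrix.mul_assoc S (S * ξ * S) S, Matrix.mul_assoc (S * ξ) S S, hSS,
        ← Matrix.mul_assoc S (S * ξ) G, ← Matrix.mul_assoc S S ξ, hSS]
    rw [htrB, Matrix.mul_sub, Matrix.sub_mul, h1, h2]
  have hMT : ((meanCurv n p ξ • (1 : Matrix (Fin n) (Fin n) ℝ) - shapeOp n p ξ) * G)ᵀ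
      = (meanCurv n p ξ • (1 : Matrix (Fin n) (Fin n) ℝ) - shapeOp n p ξ) * G := by
    rw [e1, transpose_sub, transpose_smul, transpose_smul, transpose_mul, transpose_mul,
      hGsymm, hξ.eq, ← Matrix.mul_assoc]
  rw [hMT]
  have hhalf : ((1 : ℝ) / 2) • ((meanCurv n p ξ • (1 : Matrix (Fin n) (Fin n) ℝ) - shapeOp n p ξ) * G
      + (meanCurv n p ξ • (1 : Matrix (Fin n) (Fin n) ℝ) - shapeOp n p ξ) * G)
      = (meanCurv n p ξ • (1 : Matrix (Fin n) (Fin n) ℝ) - shapeOp n p ξ) * G := by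
    rw [← two_smul ℝ, smul_smul]
    norm_num
  rw [hhalf, e1, ← e2]
  exact hpsd
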